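/- Let n ≥ 2 and let B be an n×n complex matrix with Σ_{i,j} |B_{ij}|² = 1. Then (1/2)·( (1/n)·Σ_{i≠j} |(Bᴴ B)_{ij}| + 1/n + Σ_i |B_{ii}|² ) ≤ 1/2 + 1/(2√n). -/

import Mathlib

open Matrix Finset

/-- Per-row bound: for nonnegative reals, `(∑ aᵢ)² + n·aₖ² ≤ (n + √n)·∑ aᵢ²`. -/
lemma duality_row_bound (n : ℕ) (hn : 2 ≤ n) (a : Fin n → ℝ) (hpos : ∀ i, 0 ≤ a i)
    (k : Fin n) :
    (∑ i, a i) ^ 2 + n * (a k) ^ 2 ≤ (n + Real.sqrt n) * ∑ i, (a i) ^ 2 := by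
  set t := Real.sqrt n with htdef
  have hnR : (0:ℝ) ≤ n := by positivity
  have ht2 : t * t = n := Real.mul_self_sqrt hnR
  have ht1 : 1 < t := by
    have h2 : (1:ℝ) < n := by exact_mod_cast lt_of_lt_of_le one_lt_two hn
    nlinarith [Real.sqrt_nonneg (n:ℝ)]
  set d := a k with hd
  set s := ∑ i ∈ univ.erase k, a i with hs
  set q2 := ∑ i ∈ univ.erase k, (a i) ^ 2 with hq2
  have hmem : k ∈ (univ : Finset (Fin n)) := mem_univ k
  have hsum : ∑ i, a i = s + d := by
    rw [hs, Finset.sum_erase_eq_sub hmem]; ring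
  have hsumsq : ∑ i, (a i) ^ 2 = q2 + d ^ 2 := by
    rw [hq2, Finset.sum_erase_eq_sub hmem]; ring
  have hcard : ((univ.erase k).card : ℝ) = (n : ℝ) - 1 := by
    rw [Finset.card_erase_of_mem hmem, Finset.card_univ, Fintype.card_fin]
    have : 1 ≤ n := le_trans one_le_two hn
    push_cast [Nat.cast_sub this]
    ring
  have hCS : s ^ 2 ≤ ((n : ℝ) - 1) * q2 := by
    have := sq_sum_le_card_mul_sum_sq (s := univ.erase k) (f := a)
    rw [hcard] at this
    exact this
  have hdnn : 0 ≤ d := hpos k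
  have hsnn : 0 ≤ s := Finset.sum_nonneg fun i _ => hpos i
  have hq2nn : 0 ≤ q2 := Finset.sum_nonneg fun i _ => sq_nonneg _
  rw [hsum, hsumsq]
  -- goal: (s + d)^2 + n*d^2 ≤ (n + t)*(q2 + d^2), with n = t*t
  nlinarith [sq_nonneg ((t - 1) * d - s), mul_nonneg (by linarith : (0:ℝ) ≤ t)
      (by nlinarith : (0:ℝ) ≤ ((n:ℝ) - 1) * q2 - s ^ 2), sq_nonneg (t - 1)]

/-- Matrix form of Theorem 1: for an `n × n` complex matrix `B` with unit Frobenius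
norm, `P_win = (X + 1/n + P_d)/2 ≤ 1/2 + 1/(2√n)`, where `X` is the normalized
off-diagonal `ℓ₁` norm of `Bᴴ B` and `P_d = ∑ i, |B i i|²`. -/
theorem duality_theorem_one_matrix (n : ℕ) (hn : 2 ≤ n)
    (B : Matrix (Fin n) (Fin n) ℂ)
    (hB : ∑ i, ∑ j, ‖B i j‖ ^ 2 = 1) :
    (1 / 2) * ((1 / n) * (∑ i, ∑ j ∈ univ.filter (fun j => j ≠ i),
        ‖(Bᴴ * B) i j‖) + 1 / n + ∑ i, ‖B i i‖ ^ 2) ≤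
      1 / 2 + 1 / (2 * Real.sqrt n) := by
  set t := Real.sqrt n with htdef
  have hnR : (0:ℝ) < n := by
    have : 0 < n := lt_of_lt_of_le two_pos hn
    exact_mod_cast this
  have ht2 : t * t = n := Real.mul_self_sqrt (le_of_lt hnR)
  have ht0 : 0 < t := Real.sqrt_pos.mpr hnR
  set a : Fin n → Fin n → ℝ := fun k i => ‖B k i‖ with ha
  set r : Fin n → ℝ := fun k => ∑ i, a k i with hr
  set q : Fin n → ℝ := fun k => ∑ i, (a k i) ^ 2 with hq
  have hqsum : ∑ k, q k = 1 := hB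
  -- Step 1: entrywise bound on |(Bᴴ B)_{ij}|
  have hA : ∀ i j : Fin n, ‖(Bᴴ * B) i j‖ ≤ ∑ k, a k i * a k j := by
    intro i j
    rw [Matrix.mul_apply]
    refine le_trans (norm_sum_le _ _) (Finset.sum_le_sum fun k _ => ?_)
    rw [Matrix.conjTranspose_apply]
    simp [ha]
  -- Step 2: the off-diagonal double sum is bounded by ∑ₖ (rₖ² − qₖ)
  set X : ℝ := ∑ i, ∑ j ∈ univ.filter (fun j => j ≠ i), ‖(Bᴴ * B) i j‖
    with hX
  have hXle : X ≤ ∑ k, ((r k) ^ 2 - q k) := by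
    have h1 : X ≤ ∑ i, ∑ j ∈ univ.filter (fun j => j ≠ i), ∑ k, a k i * a k j :=
      Finset.sum_le_sum fun i _ => Finset.sum_le_sum fun j _ => hA i j
    refine le_trans h1 (le_of_eq ?_)
    have h2 : ∀ i : Fin n, ∑ j ∈ univ.filter (fun j => j ≠ i), ∑ k, a k i * a k j
        = ∑ k, (a k i * (r k - a k i)) := by
      intro i
      rw [Finset.sum_comm]
      refine Finset.sum_congr rfl fun k _ => ?_
      rw [Finset.filter_ne', Finset.sum_erase_eq_sub (mem_univ i), ← Finset.mul_sum,
        mul_sub]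
    rw [Finset.sum_congr rfl fun i _ => h2 i, Finset.sum_comm]
    refine Finset.sum_congr rfl fun k _ => ?_
    simp only [hr, hq, mul_sub, Finset.sum_sub_distrib]
    rw [← Finset.sum_mul, sq]
    congr 1
    exact Finset.sum_congr rfl fun i _ => by ring
  -- Step 3: per-row bound summed
  have hrow : ∀ k : Fin n, (r k) ^ 2 + n * (a k k) ^ 2 ≤ ((n : ℝ) + t) * q k := by
    intro k
    exact duality_row_bound n hn (a k) (fun i => norm_nonneg _) k
  set D : ℝ := ∑ i, ‖B i i‖ ^ 2 with hD
  have hDa : D = ∑ k, (a k k) ^ 2 := rfl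
  have key : X + n * D ≤ (n : ℝ) + t - 1 := by
    have h3 : ∑ k, ((r k) ^ 2 - q k) + n * ∑ k, (a k k) ^ 2
        = ∑ k, ((r k) ^ 2 + n * (a k k) ^ 2) - ∑ k, q k := by
      rw [Finset.mul_sum, Finset.sum_sub_distrib, Finset.sum_add_distrib]
      ring
    have h4 : ∑ k, ((r k) ^ 2 + n * (a k k) ^ 2) ≤ ∑ k, ((n : ℝ) + t) * q k :=
      Finset.sum_le_sum fun k _ => hrow k
    rw [← Finset.mul_sum] at h4
    rw [hqsum] at h3 h4
    calc X + n * D ≤ ∑ k, ((r k) ^ 2 - q k) + n * ∑ k, (a k k) ^ 2 := by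
          rw [hDa]; linarith [hXle]
      _ = ∑ k, ((r k) ^ 2 + n * (a k k) ^ 2) - 1 := h3
      _ ≤ ((n : ℝ) + t) * 1 - 1 := by linarith
      _ = (n : ℝ) + t - 1 := by ring
  -- Final arithmetic
  have hLHS : (1 / 2 : ℝ) * ((1 / n) * X + 1 / n + D) = (X + 1 + n * D) / (2 * n) := by
    field_simp
  rw [hLHS]
  rw [div_le_iff₀ (by positivity)]
  have hRHS : (1 / 2 + 1 / (2 * t)) * (2 * n) = (n : ℝ) + t := by
    field_simp
    nlinarith [ht2]
  rw [hRHS]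
  linarith [key]
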